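/- Let R be a reduced crystallographic root system with base Π and β ∈ Π. Let σ⁺_β be half the sum of the positive roots whose coefficient on β is ≥ 1. Then 2σ⁺_β is an integer multiple of the fundamental weight Λ_β: namely 2σ⁺_β = k_β Λ_β where k_β = ⟨2σ⁺_β, β∨⟩. Equivalently, ⟨2σ⁺_β, α∨⟩ = 0 for every simple root α ≠ β. -/

import Mathlib

open scoped RealInnerProductSpace

/-- `β` is a nonnegative linear combination of the elements of `Δ`. -/
def IsPosComb {V : Type*} [AddCommGroup V] [Module ℝ V] (Δ : Finset V) (β : V) : Prop :=
  ∃ c : V → ℝ, (∀ a ∈ Δ, 0 ≤ c a) ∧ β = ∑ a ∈ Δ, c a • a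

/-- A reduced crystallographic root system in a Euclidean vector space. -/
structure IsReducedCrystRootSystem {V : Type*} [NormedAddCommGroup V] [InnerProductSpace ℝ V]
    (R : Finset V) : Prop where
  nonzero : ∀ α ∈ R, α ≠ 0
  span_top : Submodule.span ℝ (R : Set V) = ⊤
  crystallographic : ∀ α ∈ R, ∀ β ∈ R, ∃ n : ℤ, (n : ℝ) = 2 * ⟪β, α⟫ / ⟪α, α⟫
  reflection_mem : ∀ α ∈ R, ∀ β ∈ R, β - (2 * ⟪β, α⟫ / ⟪α, α⟫) • α ∈ R
  reduced : ∀ α ∈ R, ∀ c : ℝ, c • α ∈ R → c = 1 ∨ c = -1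

/-- `Δ` is a base (a system of simple roots) of the root system `R`. -/
structure IsBase {V : Type*} [NormedAddCommGroup V] [InnerProductSpace ℝ V]
    (R Δ : Finset V) : Prop where
  subset : Δ ⊆ R
  indep : LinearIndependent ℝ (fun x : (Δ : Set V) => (x.1 : V))
  pos_or_neg : ∀ β ∈ R, IsPosComb Δ β ∨ IsPosComb Δ (-β)

lemma coeff_unique_aux {V : Type*} [NormedAddCommGroup V] [InnerProductSpace ℝ V]
    (Δ : Finset V) (hindep : LinearIndependent ℝ (fun x : (Δ : Set V) => (x.1 : V)))
    (c d : V → ℝ) (h : ∑ a ∈ Δ, c a • a = ∑ a ∈ Δ, d a • a) :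
    ∀ a ∈ Δ, c a = d a := by
  have h0 : ∑ a ∈ Δ, (c a - d a) • a = 0 := by
    simp [sub_smul, Finset.sum_sub_distrib, h]
  have h1 : ∑ x ∈ Δ.attach, (c x.1 - d x.1) • (x.1 : V) = 0 := by
    rwa [Finset.sum_attach Δ (fun a => (c a - d a) • a)]
  intro a ha
  have := linearIndependent_iff'.mp hindep Δ.attach (fun x => c x.1 - d x.1) h1 ⟨a, ha⟩
    (Finset.mem_attach _ _)
  simp only at this
  linarith

/-- Let `β` be a simple root and `σplus` half the sum of the positive roots whose
coefficient on `β` is `≥ 1`.  Then `2σplus` is the multiple `k_β Λ_β` of the fundamental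
weight `Λ_β` with `k_β = ⟨2σplus, β∨⟩`; equivalently, `⟨2σplus, α∨⟩ = 0` for every simple
root `α ≠ β`. -/
theorem two_sigma_plus_is_multiple_of_fundamental_weight
    {V : Type*} [NormedAddCommGroup V] [InnerProductSpace ℝ V] [FiniteDimensional ℝ V]
    (R Δ : Finset V)
    (hR : IsReducedCrystRootSystem R) (hΔ : IsBase R Δ)
    (β : V) (hβ : β ∈ Δ)
    (coeff : V → V → ℝ)
    (hcoeff : ∀ γ ∈ R, γ = ∑ a ∈ Δ, coeff γ a • a)
    (σplus : V)
    (hσplus : σplus = (2⁻¹ : ℝ) •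
      ∑ γ ∈ @Finset.filter V (fun γ => 1 ≤ coeff γ β) (Classical.decPred _)
          (@Finset.filter V (IsPosComb Δ) (Classical.decPred _) R), γ) :
    ∀ α ∈ Δ, α ≠ β → 2 * ⟪(2 : ℝ) • σplus, α⟫ / ⟪α, α⟫ = 0 := by
    classical
  subst hσplus
  intro α hα hαβ
  set S : Finset V := @Finset.filter V (fun γ => 1 ≤ coeff γ β) (Classical.decPred _)
      (@Finset.filter V (IsPosComb Δ) (Classical.decPred _) R) with hS
  have hαR : α ∈ R := hΔ.subset hα
  have hαne : α ≠ 0 := hR.nonzero α hαR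
  have hαα : (⟪α, α⟫ : ℝ) ≠ 0 := by
    exact (inner_self_ne_zero (𝕜 := ℝ)).mpr hαne
  set k : V → ℝ := fun γ => 2 * ⟪γ, α⟫ / ⟪α, α⟫ with hk
  set f : V → V := fun γ => γ - k γ • α with hf
  -- membership in S
  have hmemS : ∀ γ, γ ∈ S ↔ γ ∈ R ∧ IsPosComb Δ γ ∧ 1 ≤ coeff γ β := by
    intro γ
    simp only [hS, Finset.mem_filter]
    tauto
  -- coefficients of f γ
  have hcoefff : ∀ γ ∈ R, ∀ b ∈ Δ, coeff (f γ) b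
      = coeff γ b - (if b = α then k γ else 0) := by
    intro γ hγ b hb
    have hfγR : f γ ∈ R := hR.reflection_mem α hαR γ hγ
    have e1 : f γ = ∑ a ∈ Δ, coeff (f γ) a • a := hcoeff _ hfγR
    have e2 : f γ = ∑ a ∈ Δ, (coeff γ a - (if a = α then k γ else 0)) • a := by
      have h3 : ∑ a ∈ Δ, (if a = α then k γ else 0) • a = k γ • α := by
        simp [ite_smul, hα]
      simp only [hf, sub_smul, Finset.sum_sub_distrib, h3]
      rw [← hcoeff γ hγ]
    exact coeff_unique_aux Δ hΔ.indep _ _ (e1.symm.trans e2) b hb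
  -- f maps S to S
  have hfS : ∀ γ ∈ S, f γ ∈ S := by
    intro γ hγS
    obtain ⟨hγR, hγpos, hγβ⟩ := (hmemS γ).mp hγS
    have hfγR : f γ ∈ R := hR.reflection_mem α hαR γ hγR
    have hcfβ : coeff (f γ) β = coeff γ β := by
      rw [hcoefff γ hγR β hβ, if_neg (fun h => hαβ h.symm), sub_zero]
    refine (hmemS (f γ)).mpr ⟨hfγR, ?_, by rw [hcfβ]; exact hγβ⟩
    rcases hΔ.pos_or_neg (f γ) hfγR with h | h
    · exact h
    · exfalso
      obtain ⟨c, hc0, hce⟩ := h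
      have e3 : ∑ a ∈ Δ, (-(coeff (f γ) a)) • a = ∑ a ∈ Δ, c a • a := by
        rw [← hce]
        have h6 : -f γ = -(∑ a ∈ Δ, coeff (f γ) a • a) := by rw [← hcoeff (f γ) hfγR]
        rw [h6]
        simp [neg_smul, Finset.sum_neg_distrib]
      have := coeff_unique_aux Δ hΔ.indep _ _ e3 β hβ
      have h4 := hc0 β hβ
      rw [← this] at h4
      rw [hcfβ] at h4
      linarith
  -- f is an involution
  have hff : ∀ γ : V, f (f γ) = γ := by
    intro γ
    have hkf : k (f γ) = - k γ := by
      simp only [hf, hk, inner_sub_left, real_inner_smul_left]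
      field_simp
      ring
    simp only [hf, hkf]
    rw [show k (γ - k γ • α) = -k γ from hkf]; simp [neg_smul]
  -- sum invariance
  have hsum : ∑ γ ∈ S, f γ = ∑ γ ∈ S, γ := by
    refine Finset.sum_nbij' (i := f) (j := f) hfS hfS (fun a _ => hff a) (fun a _ => hff a)
      (fun a _ => rfl)
  have hsum2 : (∑ γ ∈ S, k γ) • α = 0 := by
    have : ∑ γ ∈ S, (γ - k γ • α) = ∑ γ ∈ S, γ := hsum
    rw [Finset.sum_sub_distrib] at this
    have h5 : ∑ γ ∈ S, k γ • α = 0 := sub_eq_self.mp this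
    rw [← Finset.sum_smul] at h5
    exact h5
  have hksum : ∑ γ ∈ S, k γ = 0 := by
    by_contra h
    exact hαne (smul_eq_zero.mp hsum2 |>.resolve_left h)
  -- conclude
  have h2σ : (2 : ℝ) • ((2⁻¹ : ℝ) • ∑ γ ∈ S, γ) = ∑ γ ∈ S, γ := by
    rw [smul_smul]; norm_num
  rw [h2σ]
  have : (⟪∑ γ ∈ S, γ, α⟫ : ℝ) = ∑ γ ∈ S, ⟪γ, α⟫ := by
    exact sum_inner S (fun γ => γ) α
  rw [this]
  rw [Finset.mul_sum, Finset.sum_div]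
  simpa [hk] using hksum
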